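/- For every integer j, Σ_{0 ≤ i ≤ r−1, i ≡ j mod a} ϑ(i) = 0 and Σ_{0 ≤ i ≤ r−1, i ≡ j mod b} ϑ(i) = 0. (These are the vanishing conditions [(φ_k)_⋆(ϑ)](χ) ≡ 0 for k = 2, 3 of the key properties, which the case (a) parameter of Section 4.4 is asserted to satisfy.) -/

import Mathlib

open scoped BigOperators

/-- The case (a) stability parameter `ϑ` of Section 4.4 for the group of type
`(1/r)(1,a,b)` with `b = ak + 1` and `r = abc + a - 2b + 1`:
`ϑ(i) = -[0 ≤ i < b] - [i = 2ab - 5b + 3] + [i = r - a - b + 2] + [r - b ≤ i ≤ r - 1]`. -/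
def vth2 (a b r : ℕ) (i : ℕ) : ℤ :=
  (if i < b then -1 else 0) +
    (if (i : ℤ) = 2 * a * b - 5 * b + 3 then -1 else 0) +
    (if (i : ℤ) = (r : ℤ) - a - b + 2 then 1 else 0) +
    (if (r : ℤ) - b ≤ (i : ℤ) ∧ (i : ℤ) ≤ (r : ℤ) - 1 then 1 else 0)

/-- For every integer `j`, `∑_{0 ≤ i ≤ r-1, i ≡ j mod a} ϑ(i) = 0` and
`∑_{0 ≤ i ≤ r-1, i ≡ j mod b} ϑ(i) = 0`. -/
private lemma card_range_mod (m t : ℕ) (hm : 0 < m) (ht : t < m) (n : ℕ) :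
    ((Finset.range n).filter (fun i => i % m = t)).card = (n + (m - 1 - t)) / m := by
  induction n with
  | zero => simp [Nat.div_eq_of_lt (show m - 1 - t < m by omega)]
  | succ n ih =>
    rw [Finset.range_add_one, Finset.filter_insert]
    by_cases h : n % m = t
    · rw [if_pos h, Finset.card_insert_of_notMem (by simp), ih]
      have hdm := Nat.div_add_mod n m
      set q := n / m with hq
      have hn : n = m * q + t := by omega
      have e1 : m * (q + 1) = m * q + m := by ring
      have d1 : n + 1 + (m - 1 - t) = m * (q + 1) + 0 := by omega
      have d2 : n + (m - 1 - t) = m * q + (m - 1) := by omega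
      rw [d1, d2, Nat.mul_add_div hm, Nat.mul_add_div hm,
        Nat.div_eq_of_lt (show (0:ℕ) < m by omega), Nat.div_eq_of_lt (show m - 1 < m by omega)]
    · rw [if_neg h, ih]
      have hdm := Nat.div_add_mod n m
      have hlt := Nat.mod_lt n hm
      set q := n / m with hq
      set s := n % m with hs
      rcases Nat.lt_or_ge s t with hst | hst
      · have d1 : n + 1 + (m - 1 - t) = m * q + (s + 1 + (m - 1 - t)) := by omega
        have d2 : n + (m - 1 - t) = m * q + (s + (m - 1 - t)) := by omega
        rw [d1, d2, Nat.mul_add_div hm, Nat.mul_add_div hm,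
          Nat.div_eq_of_lt (show s + 1 + (m - 1 - t) < m by omega),
          Nat.div_eq_of_lt (show s + (m - 1 - t) < m by omega)]
      · have hst' : t < s := by omega
        have e1 : m * (q + 1) = m * q + m := by ring
        have d1 : n + 1 + (m - 1 - t) = m * (q + 1) + (s - t) := by omega
        have d2 : n + (m - 1 - t) = m * (q + 1) + (s - t - 1) := by omega
        rw [d1, d2, Nat.mul_add_div hm, Nat.mul_add_div hm,
          Nat.div_eq_of_lt (show s - t < m by omega),
          Nat.div_eq_of_lt (show s - t - 1 < m by omega)]

private lemma card_range_mod' (m t n q s : ℕ) (hm : 0 < m) (ht : t < m) (hs : s < m)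
    (hdec : n + (m - 1 - t) = m * q + s) :
    ((Finset.range n).filter (fun i => i % m = t)).card = q := by
  rw [card_range_mod m t hm ht n, hdec, Nat.mul_add_div hm, Nat.div_eq_of_lt hs, add_zero]


private lemma moda_endgame (a k r b M Q P1 P2 t : ℕ)
    (ha : 4 ≤ a) (hk : 1 ≤ k) (hta : t < a)
    (hb : b = a * k + 1) (hrM : r + 1 = a * M) (hQ : M = Q + k + 1)
    (hP1m : P1 % a = a - 2) (hP2m : P2 % a = 0) :
    -(((Finset.range b).filter (fun i => i % a = t)).card : ℤ)
      - (if P1 % a = t then (1 : ℤ) else 0) + (if P2 % a = t then (1 : ℤ) else 0)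
      + ((((Finset.range r).filter (fun i => i % a = t)).card : ℤ)
         - (((Finset.range (r - b)).filter (fun i => i % a = t)).card : ℤ)) = 0 := by
  have ha0' : 0 < a := by omega
  have eM : a * M = a * Q + a * k + a := by rw [hQ]; ring
  have eQ1 : a * (Q + 1) = a * Q + a := by ring
  have eQk : a * (Q + k) = a * Q + a * k := by ring
  have ek1 : a * (k + 1) = a * k + a := by ring
  simp only [hP1m, hP2m]
  rcases (by omega : t = 0 ∨ (1 ≤ t ∧ t + 3 ≤ a) ∨ t = a - 2 ∨ t = a - 1) with h | ⟨h1, h2⟩ | h | h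
  · rw [card_range_mod' a t b (k + 1) 0 ha0' hta (by omega) (by omega),
      card_range_mod' a t r M (a - 2 - t) ha0' hta (by omega) (by omega),
      card_range_mod' a t (r - b) (Q + 1) (a - 3 - t) ha0' hta (by omega) (by omega),
      if_neg (by omega), if_pos (by omega)]
    omega
  · rw [card_range_mod' a t b k (a - t) ha0' hta (by omega) (by omega),
      card_range_mod' a t r M (a - 2 - t) ha0' hta (by omega) (by omega),
      card_range_mod' a t (r - b) (Q + 1) (a - 3 - t) ha0' hta (by omega) (by omega),
      if_neg (by omega), if_neg (by omega)]
    omega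
  · rw [card_range_mod' a t b k (a - t) ha0' hta (by omega) (by omega),
      card_range_mod' a t r M 0 ha0' hta (by omega) (by omega),
      card_range_mod' a t (r - b) Q (2 * a - 3 - t) ha0' hta (by omega) (by omega),
      if_pos (by omega), if_neg (by omega)]
    omega
  · rw [card_range_mod' a t b k (a - t) ha0' hta (by omega) (by omega),
      card_range_mod' a t r (Q + k) (a - 1) ha0' hta (by omega) (by omega),
      card_range_mod' a t (r - b) Q (2 * a - 3 - t) ha0' hta (by omega) (by omega),
      if_neg (by omega), if_neg (by omega)]
    omega

private lemma modb_endgame (a b r P0 P1 P2 t : ℕ)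
    (ha : 4 ≤ a) (hb5 : 5 ≤ b) (hba : a < b) (htb : t < b)
    (hrP : r = b * P0 + b + a + 1)
    (hP1m : P1 % b = 3) (hP2m : P2 % b = 3) :
    -(((Finset.range b).filter (fun i => i % b = t)).card : ℤ)
      - (if P1 % b = t then (1 : ℤ) else 0) + (if P2 % b = t then (1 : ℤ) else 0)
      + ((((Finset.range r).filter (fun i => i % b = t)).card : ℤ)
         - (((Finset.range (r - b)).filter (fun i => i % b = t)).card : ℤ)) = 0 := by
  have hb0' : 0 < b := by omega
  have eP02 : b * (P0 + 2) = b * P0 + 2 * b := by ring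
  have eP01 : b * (P0 + 1) = b * P0 + b := by ring
  simp only [hP1m, hP2m]
  rcases le_or_gt t a with h | h
  · rw [card_range_mod' b t b 1 (b - 1 - t) hb0' htb (by omega) (by omega),
      card_range_mod' b t r (P0 + 2) (a - t) hb0' htb (by omega) (by omega),
      card_range_mod' b t (r - b) (P0 + 1) (a - t) hb0' htb (by omega) (by omega)]
    split_ifs <;> omega
  · rw [card_range_mod' b t b 1 (b - 1 - t) hb0' htb (by omega) (by omega),
      card_range_mod' b t r (P0 + 1) (a + b - t) hb0' htb (by omega) (by omega),
      card_range_mod' b t (r - b) P0 (a + b - t) hb0' htb (by omega) (by omega)]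
    split_ifs <;> omega


private lemma sum_vth2_eq (a b r P1 P2 : ℕ) (p : ℕ → Prop) [DecidablePred p] (hbr : b ≤ r)
    (hP1 : (P1 : ℤ) = 2 * (a : ℤ) * b - 5 * b + 3)
    (hP2 : (P2 : ℤ) = (r : ℤ) - a - b + 2)
    (hP1r : P1 < r) (hP2r : P2 < r) :
    (∑ i ∈ (Finset.range r).filter p, vth2 a b r i) =
      -(((Finset.range b).filter p).card : ℤ)
      - (if p P1 then 1 else 0) + (if p P2 then 1 else 0)
      + ((((Finset.range r).filter p).card : ℤ)
         - (((Finset.range (r - b)).filter p).card : ℤ)) := by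
  classical
  set F := (Finset.range r).filter p with hF
  have e1 : (∑ i ∈ F, (if i < b then (-1 : ℤ) else 0))
      = -(((Finset.range b).filter p).card : ℤ) := by
    rw [← Finset.sum_filter, Finset.sum_const]
    have hset : F.filter (fun i => i < b) = (Finset.range b).filter p := by
      ext i
      simp only [hF, Finset.filter_filter, Finset.mem_filter, Finset.mem_range]
      constructor
      · rintro ⟨_, hp, hib⟩; exact ⟨hib, hp⟩
      · rintro ⟨hib, hp⟩; exact ⟨lt_of_lt_of_le hib hbr, hp, hib⟩
    rw [hset]
    simp [nsmul_eq_mul]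
  have e2 : (∑ i ∈ F, (if (i : ℤ) = 2 * (a : ℤ) * b - 5 * b + 3 then (-1 : ℤ) else 0))
      = -(if p P1 then (1 : ℤ) else 0) := by
    simp only [← hP1, Nat.cast_inj]
    rw [Finset.sum_ite_eq' F P1 (fun _ => (-1 : ℤ))]
    have : P1 ∈ F ↔ p P1 := by
      simp [hF, Finset.mem_filter, Finset.mem_range, hP1r]
    rw [if_congr this rfl rfl]
    split_ifs <;> ring
  have e3 : (∑ i ∈ F, (if (i : ℤ) = (r : ℤ) - a - b + 2 then (1 : ℤ) else 0))
      = (if p P2 then (1 : ℤ) else 0) := by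
    simp only [← hP2, Nat.cast_inj]
    rw [Finset.sum_ite_eq' F P2 (fun _ => (1 : ℤ))]
    have : P2 ∈ F ↔ p P2 := by
      simp [hF, Finset.mem_filter, Finset.mem_range, hP2r]
    rw [if_congr this rfl rfl]
  have e4 : (∑ i ∈ F, (if (r : ℤ) - b ≤ (i : ℤ) ∧ (i : ℤ) ≤ (r : ℤ) - 1 then (1 : ℤ) else 0))
      = (((Finset.range r).filter p).card : ℤ)
        - (((Finset.range (r - b)).filter p).card : ℤ) := by
    have step1 : (∑ i ∈ F, (if (r : ℤ) - b ≤ (i : ℤ) ∧ (i : ℤ) ≤ (r : ℤ) - 1 then (1 : ℤ) else 0))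
        = ∑ i ∈ F, (if r - b ≤ i then (1 : ℤ) else 0) := by
      refine Finset.sum_congr rfl (fun i hi => ?_)
      have hir : i < r := Finset.mem_range.mp (Finset.mem_filter.mp hi).1
      exact if_congr (by constructor <;> intro h <;> omega) rfl rfl
    rw [step1, ← Finset.sum_filter, Finset.sum_const]
    have hsub : (Finset.range (r - b)).filter p ⊆ (Finset.range r).filter p :=
      Finset.filter_subset_filter p (Finset.range_subset_range.mpr (by omega))
    have hset : F.filter (fun i => r - b ≤ i)
        = (Finset.range r).filter p \ (Finset.range (r - b)).filter p := by
      ext i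
      simp only [hF, Finset.filter_filter, Finset.mem_filter, Finset.mem_sdiff,
        Finset.mem_range, not_and]
      constructor
      · rintro ⟨hir, hp, hge⟩
        exact ⟨⟨hir, hp⟩, fun hlt => by omega⟩
      · rintro ⟨⟨hir, hp⟩, hni⟩
        refine ⟨hir, hp, ?_⟩
        by_cases hcase : i < r - b
        · exact absurd hp (hni hcase)
        · omega
    rw [hset, Finset.card_sdiff_of_subset hsub]
    have hle := Finset.card_le_card hsub
    simp only [nsmul_eq_mul, mul_one]
    omega
  calc (∑ i ∈ F, vth2 a b r i)
      = (∑ i ∈ F, (if i < b then (-1 : ℤ) else 0))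
        + (∑ i ∈ F, (if (i : ℤ) = 2 * (a : ℤ) * b - 5 * b + 3 then (-1 : ℤ) else 0))
        + (∑ i ∈ F, (if (i : ℤ) = (r : ℤ) - a - b + 2 then (1 : ℤ) else 0))
        + (∑ i ∈ F, (if (r : ℤ) - b ≤ (i : ℤ) ∧ (i : ℤ) ≤ (r : ℤ) - 1 then (1 : ℤ) else 0)) := by
        simp only [vth2, Finset.sum_add_distrib]
    _ = _ := by rw [e1, e2, e3, e4]; ring


set_option maxHeartbeats 1000000 in
theorem stmt_14 (a k c : ℕ) (ha : 4 ≤ a) (hk : 1 ≤ k) (hc : 2 ≤ c)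
    (b : ℕ) (hb : b = a * k + 1)
    (r : ℕ) (hr : (r : ℤ) = (a : ℤ) * b * c + a - 2 * b + 1) (j : ℤ) :
    (∑ i ∈ (Finset.range r).filter (fun i : ℕ => (i : ℤ) % (a : ℤ) = j % (a : ℤ)),
        vth2 a b r i) = 0 ∧
    (∑ i ∈ (Finset.range r).filter (fun i : ℕ => (i : ℤ) % (b : ℤ) = j % (b : ℤ)),
        vth2 a b r i) = 0 := by
  classical
  have ha0' : 0 < a := by omega
  have hak4 : 4 * k ≤ a * k := mul_le_mul_left ha k
  have hb5 : 5 ≤ b := by omega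
  have hmul1 : 4 * b ≤ a * b := mul_le_mul_left ha b
  have hmul2 : a * b * 2 ≤ a * b * c := mul_le_mul_right hc (a * b)
  have hmul3 : b * 2 ≤ b * c := mul_le_mul_right hc b
  have hbc2 : 2 * b ≤ b * c := by omega
  have habc8 : 8 * b ≤ a * b * c := by omega
  have h2ab : 2 * (a * b) ≤ a * b * c := by omega
  have h5b : 5 * b ≤ 2 * (a * b) := by omega
  have hrZ := hr
  have hrnat : r + 2 * b = a * b * c + a + 1 := by
    have hcast : ((a * b * c : ℕ) : ℤ) = (a : ℤ) * b * c := by push_cast; ring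
    omega
  obtain ⟨P1, hP1n⟩ : ∃ p, p + 5 * b = 2 * (a * b) + 3 := ⟨2 * (a * b) + 3 - 5 * b, by omega⟩
  obtain ⟨P2, hP2n⟩ : ∃ p, p + a + b = r + 2 := ⟨r + 2 - a - b, by omega⟩
  have hbr : b ≤ r := by omega
  have habr : a + b ≤ r + 2 := by omega
  have hP1Z : (P1 : ℤ) = 2 * (a : ℤ) * b - 5 * b + 3 := by
    have h1 : (P1 : ℤ) + 5 * b = 2 * ((a * b : ℕ) : ℤ) + 3 := by exact_mod_cast hP1n
    have h2 : ((a * b : ℕ) : ℤ) = (a : ℤ) * b := by push_cast; ring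
    linear_combination h1 + 2 * h2
  have hP2Z : (P2 : ℤ) = (r : ℤ) - a - b + 2 := by omega
  have hP1r : P1 < r := by omega
  have hP2r : P2 < r := by omega
  have hbZ : (b : ℤ) = (a : ℤ) * k + 1 := by exact_mod_cast hb
  constructor
  · -- sum over residue class mod a
    set t := (j % (a : ℤ)).toNat with htdef
    have ha0 : (0 : ℤ) < a := by exact_mod_cast ha0'
    have htZ : (t : ℤ) = j % a := Int.toNat_of_nonneg (Int.emod_nonneg j (by omega))
    have hta : t < a := by
      have := Int.emod_lt_of_pos j ha0
      omega
    have hset : (Finset.range r).filter (fun i : ℕ => (i : ℤ) % (a : ℤ) = j % (a : ℤ))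
        = (Finset.range r).filter (fun i => i % a = t) := by
      apply Finset.filter_congr
      intro i _
      rw [← htZ, ← Int.natCast_mod, Nat.cast_inj]
    rw [hset, sum_vth2_eq a b r P1 P2 (fun i => i % a = t) hbr hP1Z hP2Z hP1r hP2r]
    obtain ⟨M, hM⟩ : ∃ M, b * c + 1 = M + 2 * k := ⟨b * c + 1 - 2 * k, by omega⟩
    have hMk : k + 2 ≤ M := by omega
    obtain ⟨Q, hQ⟩ : ∃ Q, M = Q + k + 1 := ⟨M - k - 1, by omega⟩
    have hMZ : (b : ℤ) * c + 1 = (M : ℤ) + 2 * k := by exact_mod_cast hM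
    have hrMZ : (r : ℤ) + 1 = (a : ℤ) * M := by linear_combination hrZ + (a : ℤ) * hMZ - 2 * hbZ
    have hrM : r + 1 = a * M := by exact_mod_cast hrMZ
    have eM : a * M = a * Q + a * k + a := by rw [hQ]; ring
    have h5k : 5 * k ≤ 2 * (a * k) := by omega
    obtain ⟨W, hWdef⟩ : ∃ W, W + 5 * k = 2 * (a * k) + 2 := ⟨2 * (a * k) + 2 - 5 * k, by omega⟩
    have hWZ : (W : ℤ) + 5 * k = 2 * ((a : ℤ) * k) + 2 := by exact_mod_cast hWdef
    have hP1W : P1 + 2 = a * W := by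
      have : (P1 : ℤ) + 2 = (a : ℤ) * W := by
        linear_combination hP1Z - (a : ℤ) * hWZ + (2 * (a : ℤ) - 5) * hbZ
      exact_mod_cast this
    obtain ⟨W0, hW0⟩ : ∃ w, W = w + 1 := ⟨W - 1, by omega⟩
    have eW : a * W = a * W0 + a := by rw [hW0]; ring
    have hP1dec : P1 = a * W0 + (a - 2) := by omega
    have hP1m : P1 % a = a - 2 := by
      rw [hP1dec, Nat.mul_add_mod, Nat.mod_eq_of_lt (by omega)]
    have hP2aZ : (P2 : ℤ) = (a : ℤ) * Q := by
      have hQZ : (M : ℤ) = (Q : ℤ) + k + 1 := by exact_mod_cast hQ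
      linear_combination hP2Z + hrMZ + (a : ℤ) * hQZ - hbZ
    have hP2a : P2 = a * Q := by exact_mod_cast hP2aZ
    have hP2m : P2 % a = 0 := by rw [hP2a]; exact Nat.mul_mod_right a Q
    exact moda_endgame a k r b M Q P1 P2 t ha hk hta hb hrM hQ hP1m hP2m
  · -- sum over residue class mod b
    have hb0' : 0 < b := by omega
    set t := (j % (b : ℤ)).toNat with htdef
    have hb0 : (0 : ℤ) < b := by exact_mod_cast hb0'
    have htZ : (t : ℤ) = j % b := Int.toNat_of_nonneg (Int.emod_nonneg j (by omega))
    have htb : t < b := by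
      have := Int.emod_lt_of_pos j hb0
      omega
    have hset : (Finset.range r).filter (fun i : ℕ => (i : ℤ) % (b : ℤ) = j % (b : ℤ))
        = (Finset.range r).filter (fun i => i % b = t) := by
      apply Finset.filter_congr
      intro i _
      rw [← htZ, ← Int.natCast_mod, Nat.cast_inj]
    rw [hset, sum_vth2_eq a b r P1 P2 (fun i => i % b = t) hbr hP1Z hP2Z hP1r hP2r]
    have hmul4 : 4 * c ≤ a * c := mul_le_mul_left ha c
    have hac8 : 8 ≤ a * c := by omega
    obtain ⟨P, hP⟩ : ∃ P, a * c = P + 2 := ⟨a * c - 2, by omega⟩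
    obtain ⟨P0, hP0⟩ : ∃ p0, P = p0 + 1 := ⟨P - 1, by omega⟩
    have hPZ : (a : ℤ) * c = (P : ℤ) + 2 := by exact_mod_cast hP
    have hrPZ : (r : ℤ) = (b : ℤ) * P + a + 1 := by linear_combination hrZ + (b : ℤ) * hPZ
    have hrP : r = b * P + a + 1 := by exact_mod_cast hrPZ
    have eP : b * P = b * P0 + b := by rw [hP0]; ring
    have hba : a < b := by
      have h4 : a * 1 ≤ a * k := mul_le_mul_right hk a
      omega
    obtain ⟨V, hV⟩ : ∃ V, 2 * a = V + 5 := ⟨2 * a - 5, by omega⟩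
    have hVZ : 2 * (a : ℤ) = (V : ℤ) + 5 := by exact_mod_cast hV
    have hP1b : P1 = b * V + 3 := by
      have : (P1 : ℤ) = (b : ℤ) * V + 3 := by linear_combination hP1Z + (b : ℤ) * hVZ
      exact_mod_cast this
    have hP1m : P1 % b = 3 := by
      rw [hP1b, Nat.mul_add_mod, Nat.mod_eq_of_lt (by omega)]
    have hP2b : P2 = b * P0 + 3 := by
      have hP0Z : (P : ℤ) = (P0 : ℤ) + 1 := by exact_mod_cast hP0
      have : (P2 : ℤ) = (b : ℤ) * P0 + 3 := by
        linear_combination hP2Z + hrPZ + (b : ℤ) * hP0Z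
      exact_mod_cast this
    have hP2m : P2 % b = 3 := by
      rw [hP2b, Nat.mul_add_mod, Nat.mod_eq_of_lt (by omega)]
    have hrP0 : r = b * P0 + b + a + 1 := by omega
    exact modb_endgame a b r P0 P1 P2 t ha hb5 hba htb hrP0 hP1m hP2m
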